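/- Let n ≥ 2 be an integer and s ∈ (0,1). There exists a constant C = C(n,s) > 0 such that for every 𝔟 ∈ [0,1], every y, ξ ∈ ℝ^n_+ and every z ≥ 0 with (y,z) ≠ (ξ,0), one has G_s((y,z),ξ) ≤ C · y_n^𝔟 · ξ_n^𝔟 · (|y−ξ|² + z²)^{−(n−2s+2𝔟)/2}. -/

import Mathlib

open MeasureTheory Real Set

/-- The last coordinate `y_n` of a point `y ∈ ℝ^n`. -/
noncomputable def lastCoord {n : ℕ} (y : EuclideanSpace ℝ (Fin n)) : ℝ :=
  if h : 0 < n then y ⟨n - 1, Nat.sub_lt h one_pos⟩ else 0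

/-- The kernel `G_s((y,z),ξ)`. -/
noncomputable def GKer (n : ℕ) (s : ℝ) (y : EuclideanSpace ℝ (Fin n)) (z : ℝ)
    (ξ : EuclideanSpace ℝ (Fin n)) : ℝ :=
  (‖y - ξ‖ ^ 2 + z ^ 2) ^ (-((n : ℝ) - 2 * s) / 2) *
    (1 - (1 + 4 * lastCoord y * lastCoord ξ / (‖y - ξ‖ ^ 2 + z ^ 2)) ^ ((2 * s - (n : ℝ)) / 2))

/-- Key scalar inequality: `1 - (1+a)^(-α) ≤ max 1 α * min 1 a`. -/
lemma key_ineq (α a : ℝ) (hα : 0 < α) (ha : 0 < a) :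
    1 - (1 + a) ^ (-α) ≤ max 1 α * min 1 a := by
  have h1a : (1:ℝ) < 1 + a := by linarith
  have hmin0 : (0:ℝ) ≤ min 1 a := le_min zero_le_one ha.le
  have hM1 : (1:ℝ) ≤ max 1 α := le_max_left _ _
  have hfrac : a / (1 + a) ≤ min 1 a := by
    apply le_min
    · rw [div_le_one (by linarith)]; linarith
    · rw [div_le_iff₀ (by linarith)]; nlinarith
  rcases le_total α 1 with hα1 | hα1
  · have h1 : (1 + a) ^ (-(1:ℝ)) ≤ (1 + a) ^ (-α) :=
      Real.rpow_le_rpow_of_exponent_le h1a.le (by linarith)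
    rw [Real.rpow_neg_one] at h1
    have h2 : 1 - (1 + a)⁻¹ = a / (1 + a) := by field_simp; ring
    calc 1 - (1 + a) ^ (-α) ≤ 1 - (1 + a)⁻¹ := by linarith
      _ = a / (1 + a) := h2
      _ ≤ min 1 a := hfrac
      _ ≤ max 1 α * min 1 a := le_mul_of_one_le_left hmin0 hM1
  · set x : ℝ := (1 + a)⁻¹ with hx_def
    have hx0 : 0 < x := by positivity
    have hx1 : x ≤ 1 := by
      rw [hx_def, inv_le_one_iff₀]; right; linarith
    have hbern : 1 + α * (x - 1) ≤ (1 + (x - 1)) ^ α :=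
      one_add_mul_self_le_rpow_one_add (by linarith) hα1
    have hxe : 1 + (x - 1) = x := by ring
    rw [hxe] at hbern
    have h2 : (1 + a) ^ (-α) = x ^ α := by
      rw [hx_def, Real.rpow_neg (by linarith), ← Real.inv_rpow (by linarith)]
    have h3 : 1 - x = a / (1 + a) := by
      rw [hx_def]; field_simp; ring
    have hmax : max 1 α = α := max_eq_right hα1
    calc 1 - (1 + a) ^ (-α) = 1 - x ^ α := by rw [h2]
      _ ≤ α * (1 - x) := by linarith
      _ = α * (a / (1 + a)) := by rw [h3]
      _ ≤ α * min 1 a := by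
          exact mul_le_mul_of_nonneg_left hfrac hα.le
      _ = max 1 α * min 1 a := by rw [hmax]

theorem stmt2 (n : ℕ) (hn : 2 ≤ n) (s : ℝ) (hs0 : 0 < s) (hs1 : s < 1) :
    ∃ C > (0 : ℝ), ∀ b ∈ Set.Icc (0 : ℝ) 1, ∀ y ξ : EuclideanSpace ℝ (Fin n),
      0 < lastCoord y → 0 < lastCoord ξ → ∀ z : ℝ, 0 ≤ z → (y, z) ≠ (ξ, 0) →
        GKer n s y z ξ ≤
          C * lastCoord y ^ b * lastCoord ξ ^ b *
            (‖y - ξ‖ ^ 2 + z ^ 2) ^ (-((n : ℝ) - 2 * s + 2 * b) / 2) := by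
  have hn2 : (2:ℝ) ≤ (n:ℝ) := by exact_mod_cast hn
  set α : ℝ := ((n:ℝ) - 2 * s) / 2 with hα_def
  have hα : 0 < α := by unfold α; linarith
  set M : ℝ := max 1 α with hM_def
  have hM1 : (1:ℝ) ≤ M := le_max_left _ _
  refine ⟨4 * M, by linarith, ?_⟩
  intro b hb y ξ hy hξ z hz hne
  obtain ⟨hb0, hb1⟩ := hb
  set yn := lastCoord y
  set ξn := lastCoord ξ
  set D : ℝ := ‖y - ξ‖ ^ 2 + z ^ 2 with hD_def
  have hD : 0 < D := by
    rcases eq_or_ne y ξ with h | h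
    · have hz' : z ≠ 0 := fun h0 => hne (by simp [h, h0])
      have : 0 < z ^ 2 := by positivity
      have h2 : (0:ℝ) ≤ ‖y - ξ‖ ^ 2 := by positivity
      unfold D; linarith
    · have : 0 < ‖y - ξ‖ := by
        rw [norm_pos_iff, sub_ne_zero]; exact h
      have : 0 < ‖y - ξ‖ ^ 2 := by positivity
      have h2 : (0:ℝ) ≤ z ^ 2 := by positivity
      unfold D; linarith
  set a : ℝ := 4 * yn * ξn / D with ha_def
  have ha : 0 < a := by positivity
  -- rewrite GKer
  have hGKer : GKer n s y z ξ = D ^ (-α) * (1 - (1 + a) ^ (-α)) := by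
    unfold GKer
    have e1 : -((n:ℝ) - 2 * s) / 2 = -α := by unfold α; ring
    have e2 : (2 * s - (n:ℝ)) / 2 = -α := by unfold α; ring
    rw [e1, e2]
  rw [hGKer]
  -- key chain
  have h1 : 1 - (1 + a) ^ (-α) ≤ M * min 1 a := key_ineq α a hα ha
  have h2 : min 1 a ≤ a ^ b := by
    rcases le_total a 1 with haa | haa
    · have : a ^ (1:ℝ) ≤ a ^ b := Real.rpow_le_rpow_of_exponent_ge ha haa hb1
      rw [Real.rpow_one] at this
      exact le_trans (min_le_right _ _) this
    · have : a ^ (0:ℝ) ≤ a ^ b := Real.rpow_le_rpow_of_exponent_le haa hb0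
      rw [Real.rpow_zero] at this
      exact le_trans (min_le_left _ _) this
  have h3 : a ^ b ≤ 4 * (yn ^ b * ξn ^ b * D ^ (-b)) := by
    have e : a = 4 * (yn * ξn / D) := by unfold a; ring
    have hq : (0:ℝ) ≤ yn * ξn / D := by positivity
    rw [e, Real.mul_rpow (by norm_num) hq]
    have h4b : (4:ℝ) ^ b ≤ 4 := by
      have : (4:ℝ) ^ b ≤ (4:ℝ) ^ (1:ℝ) :=
        Real.rpow_le_rpow_of_exponent_le (by norm_num) hb1
      rwa [Real.rpow_one] at this
    have hqe : (yn * ξn / D) ^ b = yn ^ b * ξn ^ b * D ^ (-b) := by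
      rw [Real.div_rpow (by positivity) hD.le, Real.mul_rpow hy.le hξ.le,
        Real.rpow_neg hD.le, div_eq_mul_inv]
    rw [hqe]
    have hrpos : (0:ℝ) ≤ yn ^ b * ξn ^ b * D ^ (-b) := by positivity
    exact mul_le_mul_of_nonneg_right h4b hrpos
  have hchain : 1 - (1 + a) ^ (-α) ≤ M * (4 * (yn ^ b * ξn ^ b * D ^ (-b))) := by
    calc 1 - (1 + a) ^ (-α) ≤ M * min 1 a := h1
      _ ≤ M * (a ^ b) := by
          apply mul_le_mul_of_nonneg_left (le_trans h2 (le_refl _)) (by linarith)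
      _ ≤ M * (4 * (yn ^ b * ξn ^ b * D ^ (-b))) := by
          apply mul_le_mul_of_nonneg_left h3 (by linarith)
  have hDα : (0:ℝ) < D ^ (-α) := Real.rpow_pos_of_pos hD _
  have hfinal : D ^ (-α) * (1 - (1 + a) ^ (-α)) ≤
      D ^ (-α) * (M * (4 * (yn ^ b * ξn ^ b * D ^ (-b)))) :=
    mul_le_mul_of_nonneg_left hchain hDα.le
  refine hfinal.trans (le_of_eq ?_)
  have he : -((n:ℝ) - 2 * s + 2 * b) / 2 = -α + -b := by unfold α; ring
  rw [he, Real.rpow_add hD]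
  ring
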